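/- Let g : ℝ^d → ℝ be twice continuously differentiable, and suppose the trajectory point (x,u) equals the nominal point (z,v) plus an error e with e = Σ_{τ=0}^{t-1} Φ_τ d_τ, where each disturbance d_τ lies in Λ_τ·B_∞ for matrices Λ_τ and B_∞ the unit ∞-ball. Suppose further that (1/2)ξᵀ∇²g(p)ξ ≤ χ for all points p on the segment between (z,v) and (x,u) and all ξ in the unit ∞-ball, and that ‖e‖_∞ ≤ ρ. Then g(x,u) ≤ g(z,v) + Σ_{τ=0}^{t-1} ‖(Φ_τ Λ_τ)ᵀ ∇g(z,v)‖₁ + χ·ρ². -/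

import Mathlib

open Matrix

lemma lin_mulVec {dd kk : ℕ} (L : (Fin dd → ℝ) →L[ℝ] ℝ) (M : Matrix (Fin dd) (Fin kk) ℝ)
    (ξ : Fin kk → ℝ) :
    L (M.mulVec ξ) = ∑ j, (Mᵀ.mulVec (fun i => L (Pi.single i 1)) j) * ξ j := by
  have hv : ∀ v : Fin dd → ℝ, L v = ∑ i, v i * L (Pi.single i 1) := by
    intro v
    conv_lhs => rw [← Finset.univ_sum_single v]
    rw [map_sum]
    refine Finset.sum_congr rfl fun i _ => ?_
    have h1 : (Pi.single i (v i) : Fin dd → ℝ) = v i • (Pi.single i 1 : Fin dd → ℝ) := by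
      ext j
      by_cases hji : j = i <;> subst_eqs <;> simp [Pi.single_apply, *]
    rw [h1, L.map_smul, smul_eq_mul]
  rw [hv]
  simp only [Matrix.mulVec, dotProduct, Matrix.transpose_apply, Finset.sum_mul]
  rw [Finset.sum_comm]
  exact Finset.sum_congr rfl fun j _ => Finset.sum_congr rfl fun i _ => by ring

theorem stmt7 {dd nn kk : ℕ} (t : ℕ) (g : (Fin dd → ℝ) → ℝ) (hg : ContDiff ℝ 2 g)
    (y w e : Fin dd → ℝ) (heq : y = w + e)
    (Φ : ℕ → Matrix (Fin dd) (Fin nn) ℝ) (Λ : ℕ → Matrix (Fin nn) (Fin kk) ℝ)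
    (dist : ℕ → Fin nn → ℝ)
    (he : e = ∑ τ ∈ Finset.range t, (Φ τ).mulVec (dist τ))
    (hd : ∀ τ ∈ Finset.range t, ∃ ξ : Fin kk → ℝ, ‖ξ‖ ≤ 1 ∧ dist τ = (Λ τ).mulVec ξ)
    (χ ρ : ℝ)
    (hHess : ∀ θ ∈ Set.Icc (0:ℝ) 1, ∀ ξ : Fin dd → ℝ, ‖ξ‖ ≤ 1 →
      (1/2) * fderiv ℝ (fderiv ℝ g) (w + θ • e) ξ ξ ≤ χ)
    (hρ : ‖e‖ ≤ ρ) :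
    g y ≤ g w + (∑ τ ∈ Finset.range t,
        ∑ j, |(Φ τ * Λ τ)ᵀ.mulVec (fun i => fderiv ℝ g w (Pi.single i 1)) j|)
      + χ * ρ^2 := by
  have hgdiff : Differentiable ℝ g := hg.differentiable (by norm_num)
  have hg1 : ContDiff ℝ 1 (fderiv ℝ g) := hg.fderiv_right (by norm_num)
  have hg1diff : Differentiable ℝ (fderiv ℝ g) := hg1.differentiable one_ne_zero
  -- χ ≥ 0, ρ ≥ 0
  have hχ0 : 0 ≤ χ := by
    have := hHess 0 (by constructor <;> norm_num) 0 (by simp)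
    simpa using this
  have hρ0 : 0 ≤ ρ := le_trans (norm_nonneg e) hρ
  -- quadratic bound
  have hquad : ∀ θ ∈ Set.Icc (0:ℝ) 1,
      fderiv ℝ (fderiv ℝ g) (w + θ • e) e e ≤ 2 * (χ * ρ^2) := by
    intro θ hθ
    rcases eq_or_lt_of_le hρ0 with h0 | h0
    · have he0 : e = 0 := by
        have : ‖e‖ ≤ 0 := by rw [h0]; exact hρ
        simpa using this
      simp [he0, ← h0]
    · set ξ : Fin dd → ℝ := ρ⁻¹ • e with hξ
      have hξn : ‖ξ‖ ≤ 1 := by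
        rw [hξ, norm_smul, norm_inv, Real.norm_eq_abs, abs_of_pos h0]
        rw [inv_mul_le_iff₀ h0, mul_one]; exact hρ
      have heξ : e = ρ • ξ := by rw [hξ, smul_smul, mul_inv_cancel₀ (ne_of_gt h0), one_smul]
      have hb := hHess θ hθ ξ hξn
      have key : fderiv ℝ (fderiv ℝ g) (w + θ • e) e e
          = ρ^2 * fderiv ℝ (fderiv ℝ g) (w + θ • e) ξ ξ := by
        set A := fderiv ℝ (fderiv ℝ g) (w + θ • e) with hA
        rw [heξ, A.map_smul, ContinuousLinearMap.smul_apply, (A ξ).map_smul]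
        simp only [smul_eq_mul]
        ring
      rw [key]; nlinarith
  -- derivative machinery
  have hline : ∀ θ : ℝ, HasDerivAt (fun s : ℝ => w + s • e) e θ := by
    intro θ
    have := ((hasDerivAt_id θ).smul_const e).const_add w
    simpa using this
  have hh : ∀ θ : ℝ, HasDerivAt (fun s => g (w + s • e)) (fderiv ℝ g (w + θ • e) e) θ := by
    intro θ
    exact ((hgdiff (w + θ • e)).hasFDerivAt).comp_hasDerivAt θ (hline θ)
  have hh1 : ∀ θ : ℝ, HasDerivAt (fun s => fderiv ℝ g (w + s • e) e)
      (fderiv ℝ (fderiv ℝ g) (w + θ • e) e e) θ := by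
    intro θ
    have h2 : HasDerivAt (fun s => fderiv ℝ g (w + s • e))
        (fderiv ℝ (fderiv ℝ g) (w + θ • e) e) θ :=
      ((hg1diff (w + θ • e)).hasFDerivAt).comp_hasDerivAt θ (hline θ)
    have := (ContinuousLinearMap.apply ℝ ℝ e).hasFDerivAt.comp_hasDerivAt θ h2
    exact this
  -- step 1: h'(θ) ≤ h'(0) + 2χρ²θ on [0,1]
  set c : ℝ := 2 * (χ * ρ^2) with hc
  have hQanti : AntitoneOn (fun θ => fderiv ℝ g (w + θ • e) e - c * θ) (Set.Icc 0 1) := by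
    apply antitoneOn_of_deriv_nonpos (convex_Icc 0 1)
    · exact Continuous.continuousOn (by
        have : Continuous (fun θ : ℝ => fderiv ℝ g (w + θ • e) e) :=
          continuous_iff_continuousAt.2 fun θ => (hh1 θ).continuousAt
        fun_prop)
    · intro θ _
      exact ((hh1 θ).sub ((hasDerivAt_id θ).const_mul c)).differentiableAt.differentiableWithinAt
    · intro θ hθ
      rw [interior_Icc] at hθ
      have hc' : HasDerivAt (fun x : ℝ => c * x) c θ := by
        simpa using (hasDerivAt_id θ).const_mul c
      have hD : HasDerivAt (fun θ => fderiv ℝ g (w + θ • e) e - c * θ) _ θ := (hh1 θ).sub hc'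
      rw [hD.deriv]
      have := hquad θ ⟨le_of_lt hθ.1, le_of_lt hθ.2⟩
      nlinarith
  have hstep1 : ∀ θ ∈ Set.Icc (0:ℝ) 1,
      fderiv ℝ g (w + θ • e) e ≤ fderiv ℝ g w e + c * θ := by
    intro θ hθ
    have := hQanti (Set.left_mem_Icc.2 zero_le_one) hθ hθ.1
    simp only [zero_smul, add_zero, mul_zero, sub_zero] at this
    linarith
  -- step 2: g(w+e) ≤ g(w) + h'(0) + χρ²
  have hPanti : AntitoneOn
      (fun θ => g (w + θ • e) - θ * fderiv ℝ g w e - (χ * ρ^2) * θ^2) (Set.Icc 0 1) := by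
    apply antitoneOn_of_deriv_nonpos (convex_Icc 0 1)
    · exact Continuous.continuousOn (by
        have : Continuous (fun θ : ℝ => g (w + θ • e)) :=
          continuous_iff_continuousAt.2 fun θ => (hh θ).continuousAt
        fun_prop)
    · intro θ _
      exact (((hh θ).sub ((hasDerivAt_id θ).mul_const _)).sub
        (((hasDerivAt_pow 2 θ).const_mul _))).differentiableAt.differentiableWithinAt
    · intro θ hθ
      rw [interior_Icc] at hθ
      have hl' : HasDerivAt (fun x : ℝ => x * fderiv ℝ g w e) (fderiv ℝ g w e) θ := by
        simpa using (hasDerivAt_id θ).mul_const (fderiv ℝ g w e)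
      have hD : HasDerivAt (fun θ => g (w + θ • e) - θ * fderiv ℝ g w e - (χ * ρ^2) * θ^2) _ θ :=
        ((hh θ).sub hl').sub ((hasDerivAt_pow 2 θ).const_mul (χ * ρ^2))
      rw [hD.deriv]
      have := hstep1 θ ⟨le_of_lt hθ.1, le_of_lt hθ.2⟩
      rw [hc] at this
      norm_num
      nlinarith
  have hmain : g (w + e) ≤ g w + fderiv ℝ g w e + χ * ρ^2 := by
    have := hPanti (Set.left_mem_Icc.2 zero_le_one) (Set.right_mem_Icc.2 zero_le_one) zero_le_one
    simp only [zero_smul, add_zero, mul_zero, zero_mul, sub_zero, one_smul, one_mul,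
      one_pow, mul_one, zero_pow] at this
    linarith
  -- linear term bound
  have hlin : fderiv ℝ g w e ≤ ∑ τ ∈ Finset.range t,
      ∑ j, |(Φ τ * Λ τ)ᵀ.mulVec (fun i => fderiv ℝ g w (Pi.single i 1)) j| := by
    rw [he, map_sum]
    apply Finset.sum_le_sum
    intro τ hτ
    obtain ⟨ξ, hξ1, hξ2⟩ := hd τ hτ
    rw [hξ2, Matrix.mulVec_mulVec, lin_mulVec]
    apply Finset.sum_le_sum
    intro j _
    calc _ ≤ |(Φ τ * Λ τ)ᵀ.mulVec (fun i => fderiv ℝ g w (Pi.single i 1)) j * ξ j| :=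
          le_abs_self _
      _ = |(Φ τ * Λ τ)ᵀ.mulVec (fun i => fderiv ℝ g w (Pi.single i 1)) j| * |ξ j| := abs_mul _ _
      _ ≤ _ * 1 := by
          apply mul_le_mul_of_nonneg_left _ (abs_nonneg _)
          exact le_trans (norm_le_pi_norm ξ j) hξ1
      _ = _ := mul_one _
  rw [heq]
  linarith
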